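/- Let Z = (Z_t)_{t∈[0,1]} be a right-continuous stochastic process with stationary independent increments, Z₀ = 0, such that 0 is regular for (0,∞), and with P(Z₁ > 0) = ρ. Let Z̄₁ = sup_{t∈[0,1]} Z_t and let S be distributed as Z₁ conditioned on {Z₁ > 0}. Then for every x > 0: ρ P(S > x) ≤ P(Z̄₁ > x) ≤ P(S > x). -/

import Mathlib

open MeasureTheory ProbabilityTheory

theorem discrete_bound
    {Ω : Type*} [MeasureSpace Ω] [IsProbabilityMeasure (ℙ : Measure Ω)]
    (ρ : ℝ) (hρ : ρ ∈ Set.Ioc (0 : ℝ) 1)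
    (Z : ℝ → Ω → ℝ)
    (hZm : ∀ t, Measurable (Z t))
    (hZ0 : ∀ ω, Z 0 ω = 0)
    (hstat : ∀ s t : ℝ, 0 ≤ s → s ≤ t →
      Measure.map (fun ω => Z t ω - Z s ω) ℙ = Measure.map (Z (t - s)) ℙ)
    (hindep : ∀ (n : ℕ) (t : Fin (n + 1) → ℝ), Monotone t → 0 ≤ t 0 →
      iIndepFun (m := fun _ : Fin n => (inferInstance : MeasurableSpace ℝ))
        (fun i ω => Z (t i.succ) ω - Z (t i.castSucc) ω) ℙ)
    (hpos : ∀ t : ℝ, 0 < t → t ≤ 1 → ℙ {ω | 0 < Z t ω} = ENNReal.ofReal ρ)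
    (x : ℝ) (hx : 0 ≤ x) (N : ℕ) (hN : 0 < N) :
    ENNReal.ofReal ρ * ℙ {ω | ∃ k ≤ N, x < Z ((k : ℝ) / N) ω} ≤ ℙ {ω | x < Z 1 ω} := by
  classical
  have hNR : (0 : ℝ) < (N : ℝ) := by exact_mod_cast hN
  set t : Fin (N + 1) → ℝ := fun i => (i : ℕ) / N with ht
  have hmono : Monotone t := by
    intro i j hij
    have h : ((i : ℕ) : ℝ) ≤ ((j : ℕ) : ℝ) := by exact_mod_cast (Fin.le_iff_val_le_val.mp hij)
    exact div_le_div_of_nonneg_right h hNR.le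
  set X : Fin N → Ω → ℝ := fun i ω => Z (t i.succ) ω - Z (t i.castSucc) ω with hXdef
  have hXm : ∀ i, Measurable (X i) := fun i => (hZm _).sub (hZm _)
  have hI : iIndepFun (m := fun _ : Fin N => (inferInstance : MeasurableSpace ℝ)) X ℙ :=
    hindep N t hmono (by simp [ht])
  have hX : ∀ (i : Fin N) ω, X i ω = Z ((((i:ℕ):ℝ) + 1)/N) ω - Z (((i:ℕ):ℝ)/N) ω := by
    intro i ω
    simp only [hXdef, ht, Fin.val_succ, Fin.coe_castSucc]
    push_cast
    ring_nf
  -- partial sums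
  have hsum : ∀ (j : ℕ), j ≤ N → ∀ ω,
      ∑ i ∈ Finset.univ.filter (fun i : Fin N => (i : ℕ) < j), X i ω = Z ((j : ℝ) / N) ω := by
    intro j hj ω
    have h1 : ∑ i ∈ Finset.univ.filter (fun i : Fin N => (i : ℕ) < j), X i ω
        = ∑ i ∈ Finset.range j, (Z (((i:ℝ) + 1) / N) ω - Z ((i:ℝ) / N) ω) := by
      refine Finset.sum_nbij' (i := fun i : Fin N => (i : ℕ))
        (j := fun i : ℕ => (⟨i % N, Nat.mod_lt i hN⟩ : Fin N)) ?_ ?_ ?_ ?_ ?_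
      · intro a ha; simp at ha ⊢; omega
      · intro a ha; simp at ha ⊢
        rw [Nat.mod_eq_of_lt (by omega)]; omega
      · intro a ha; simp at ha ⊢; exact Fin.ext (Nat.mod_eq_of_lt a.isLt)
      · intro a ha; simp only [Finset.mem_range] at ha
        show a % N = a
        exact Nat.mod_eq_of_lt (by omega)
      · intro a ha; rw [hX]
    have h2 := Finset.sum_range_sub (f := fun i : ℕ => Z ((i:ℝ)/N) ω) j
    push_cast at h2
    rw [h1, h2]
    simp [hZ0]
  -- first passage events
  set A : ℕ → Set Ω := fun k =>
    {ω | (∀ j < k, Z ((j : ℝ) / N) ω ≤ x) ∧ x < Z ((k : ℝ) / N) ω} with hA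
  have hAeq : ∀ k, A k =
      (⋂ j ∈ Finset.range k, {ω | Z ((j : ℝ) / N) ω ≤ x}) ∩ {ω | x < Z ((k : ℝ) / N) ω} := by
    intro k; ext ω; simp [hA]
  have hAm : ∀ k, MeasurableSet (A k) := by
    intro k
    rw [hAeq]
    exact (MeasurableSet.biInter (Finset.range k).countable_toSet
      (fun j _ => measurableSet_le (hZm _) measurable_const)).inter
      (measurableSet_lt measurable_const (hZm _))
  set E : Set Ω := {ω | ∃ k ≤ N, x < Z ((k : ℝ) / N) ω} with hE
  have hEeq : E = ⋃ k ∈ Finset.range (N + 1), A k := by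
    ext ω
    simp only [hE, Set.mem_setOf_eq, Set.mem_iUnion, Finset.mem_range, Nat.lt_succ_iff]
    constructor
    · rintro ⟨k, hk, hkx⟩
      have hex : ∃ m, m ≤ N ∧ x < Z ((m : ℝ) / N) ω := ⟨k, hk, hkx⟩
      refine ⟨Nat.find hex, (Nat.find_spec hex).1, ?_, (Nat.find_spec hex).2⟩
      intro j hj
      by_contra hcon
      push_neg at hcon
      exact Nat.find_min hex hj ⟨le_trans (le_of_lt hj) (Nat.find_spec hex).1, hcon⟩
    · rintro ⟨k, hk, _, hkx⟩
      exact ⟨k, hk, hkx⟩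
  have hEm : MeasurableSet E := by
    rw [hEeq]; exact (Finset.range (N+1)).measurableSet_biUnion (fun k _ => hAm k)
  have hgen : ∀ k l : ℕ, k < l → Disjoint (A k) (A l) := by
    intro k l hlt
    refine Set.disjoint_left.mpr ?_
    rintro ω ⟨hk1, hk2⟩ ⟨hl1, hl2⟩
    exact absurd hk2 (not_lt.mpr (hl1 k hlt))
  have hdisj : (Finset.range (N + 1) : Set ℕ).PairwiseDisjoint A := by
    intro k _ l _ hkl
    rcases lt_or_gt_of_ne hkl with h | h
    · exact hgen k l h
    · exact (hgen l k h).symm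
  have hsplit : ℙ E = ∑ k ∈ Finset.range (N + 1), ℙ (A k) := by
    rw [hEeq]
    exact measure_biUnion_finset hdisj (fun k _ => hAm k)
  -- key independence bound for k < N
  have hkey : ∀ k < N, ℙ (A k ∩ {ω | Z 1 ω - Z ((k:ℝ)/N) ω ≤ 0})
      = ℙ (A k) * ENNReal.ofReal (1 - ρ) := by
    intro k hk
    set S : Finset (Fin N) := Finset.univ.filter (fun i => (i:ℕ) < k) with hS
    set T : Finset (Fin N) := Finset.univ.filter (fun i => ¬ (i:ℕ) < k) with hT
    have hST : Disjoint S T := Finset.disjoint_filter_filter_not _ _ _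
    have hIF := hI.indepFun_finset S T hST hXm
    set φ : ((i : S) → ℝ) → (ℕ → ℝ) :=
      fun v j => ∑ i : S, if ((i : Fin N) : ℕ) < j then v i else 0 with hφ
    have hφm : Measurable φ := by
      apply measurable_pi_lambda
      intro j
      apply Finset.measurable_sum
      intro i _
      by_cases h : ((i : Fin N) : ℕ) < j
      · simpa [h] using measurable_pi_apply i
      · simpa [h] using measurable_const
    set ψ : ((i : T) → ℝ) → ℝ := fun v => ∑ i : T, v i with hψ
    have hψm : Measurable ψ := Finset.measurable_sum _ (fun i _ => measurable_pi_apply i)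
    have hφval : ∀ ω, ∀ j ≤ k, φ (fun i : S => X i ω) j = Z ((j:ℝ)/N) ω := by
      intro ω j hj
      rw [← hsum j (le_trans hj (le_of_lt hk)) ω]
      simp only [hφ]
      rw [Finset.sum_coe_sort S (fun i => if (i:ℕ) < j then X i ω else 0), ← Finset.sum_filter]
      congr 1
      simp only [hS, Finset.filter_filter]
      apply Finset.filter_congr
      intro i _
      constructor
      · exact fun h => h.2
      · exact fun h => ⟨lt_of_lt_of_le h hj, h⟩
    have hψval : ∀ ω, ψ (fun i : T => X i ω) = Z 1 ω - Z ((k:ℝ)/N) ω := by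
      intro ω
      have hsplit2 := Finset.sum_filter_add_sum_filter_not Finset.univ
        (fun i : Fin N => (i:ℕ) < k) (fun i => X i ω)
      have huniv : ∑ i : Fin N, X i ω = Z 1 ω := by
        have h1 : Finset.univ.filter (fun i : Fin N => (i:ℕ) < N) = Finset.univ := by
          apply Finset.filter_true_of_mem
          intro i _
          exact i.isLt
        have := hsum N le_rfl ω
        rw [h1] at this
        rw [this]
        congr 1
        field_simp
      have hSsum : ∑ i ∈ S, X i ω = Z ((k:ℝ)/N) ω := hsum k (le_of_lt hk) ω
      simp only [hψ]
      rw [Finset.sum_coe_sort T (fun i => X i ω)]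
      rw [← hS, ← hT] at hsplit2
      rw [huniv] at hsplit2
      rw [hSsum] at hsplit2
      linarith
    set C : Set (ℕ → ℝ) := {u | (∀ j < k, u j ≤ x) ∧ x < u k} with hC
    have hCm : MeasurableSet C := by
      have : C = (⋂ j ∈ Finset.range k, {u : ℕ → ℝ | u j ≤ x}) ∩ {u : ℕ → ℝ | x < u k} := by
        ext u; simp [hC]
      rw [this]
      exact (MeasurableSet.biInter (Finset.range k).countable_toSet
        (fun j _ => measurableSet_le (measurable_pi_apply j) measurable_const)).inter
        (measurableSet_lt measurable_const (measurable_pi_apply k))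
    have hA1 : (fun ω (i : S) => X i ω) ⁻¹' (φ ⁻¹' C) = A k := by
      ext ω
      simp only [Set.mem_preimage, hC, Set.mem_setOf_eq, hA]
      constructor
      · rintro ⟨h1, h2⟩
        refine ⟨fun j hj => ?_, ?_⟩
        · rw [← hφval ω j (le_of_lt hj)]; exact h1 j hj
        · rw [← hφval ω k le_rfl]; exact h2
      · rintro ⟨h1, h2⟩
        refine ⟨fun j hj => ?_, ?_⟩
        · rw [hφval ω j (le_of_lt hj)]; exact h1 j hj
        · rw [hφval ω k le_rfl]; exact h2
    have hB1 : (fun ω (i : T) => X i ω) ⁻¹' (ψ ⁻¹' Set.Iic 0)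
        = {ω | Z 1 ω - Z ((k:ℝ)/N) ω ≤ 0} := by
      ext ω
      simp only [Set.mem_preimage, Set.mem_Iic, Set.mem_setOf_eq, hψval ω]
    have hD : ℙ {ω | Z 1 ω - Z ((k:ℝ)/N) ω ≤ 0} = ENNReal.ofReal (1 - ρ) := by
      have h0 : (0:ℝ) ≤ (k:ℝ)/N := by positivity
      have hklt : ((k:ℝ)/N) < 1 := by
        rw [div_lt_one hNR]
        exact_mod_cast hk
      have hmap := hstat ((k:ℝ)/N) 1 h0 hklt.le
      have hc1 : ℙ {ω | Z 1 ω - Z ((k:ℝ)/N) ω ≤ 0}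
          = Measure.map (fun ω => Z 1 ω - Z ((k:ℝ)/N) ω) ℙ (Set.Iic 0) := by
        rw [Measure.map_apply (f := fun ω => Z 1 ω - Z ((k:ℝ)/N) ω) ((hZm 1).sub (hZm _)) measurableSet_Iic]
        rfl
      rw [hc1, hmap, Measure.map_apply (hZm _) measurableSet_Iic]
      have hc2 : (Z (1 - (k:ℝ)/N)) ⁻¹' (Set.Iic 0) = {ω | 0 < Z (1 - (k:ℝ)/N) ω}ᶜ := by
        ext ω; simp [not_lt]
      rw [hc2, prob_compl_eq_one_sub (measurableSet_lt measurable_const (hZm _))]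
      rw [hpos _ (by linarith) (by linarith)]
      rw [ENNReal.ofReal_sub _ hρ.1.le, ENNReal.ofReal_one]
    calc ℙ (A k ∩ {ω | Z 1 ω - Z ((k:ℝ)/N) ω ≤ 0})
        = ℙ ((fun ω (i : S) => X i ω) ⁻¹' (φ ⁻¹' C)
            ∩ (fun ω (i : T) => X i ω) ⁻¹' (ψ ⁻¹' Set.Iic 0)) := by rw [hA1, hB1]
      _ = ℙ ((fun ω (i : S) => X i ω) ⁻¹' (φ ⁻¹' C))
            * ℙ ((fun ω (i : T) => X i ω) ⁻¹' (ψ ⁻¹' Set.Iic 0)) :=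
          hIF.measure_inter_preimage_eq_mul _ _ (hφm hCm) (hψm measurableSet_Iic)
      _ = ℙ (A k) * ENNReal.ofReal (1 - ρ) := by rw [hA1, hB1, hD]
  -- assemble
  have hs1 : MeasurableSet {ω | x < Z 1 ω} := measurableSet_lt measurable_const (hZm 1)
  have hmain : ℙ E ≤ ℙ {ω | x < Z 1 ω} + ENNReal.ofReal (1 - ρ) * ℙ E := by
    have h1 : ℙ E = ℙ (E ∩ {ω | x < Z 1 ω}) + ℙ (E \ {ω | x < Z 1 ω}) :=
      (measure_inter_add_diff E hs1).symm
    have h2 : ℙ (E ∩ {ω | x < Z 1 ω}) ≤ ℙ {ω | x < Z 1 ω} :=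
      measure_mono Set.inter_subset_right
    have h3 : E \ {ω | x < Z 1 ω} = ⋃ k ∈ Finset.range (N + 1), (A k \ {ω | x < Z 1 ω}) := by
      rw [hEeq, Set.iUnion_diff]
      simp only [Set.iUnion_diff]
    have h4 : ℙ (E \ {ω | x < Z 1 ω})
        ≤ ∑ k ∈ Finset.range (N + 1), ℙ (A k \ {ω | x < Z 1 ω}) := by
      rw [h3]; exact measure_biUnion_finset_le _ _
    have h5 : ∀ k < N, ℙ (A k \ {ω | x < Z 1 ω}) ≤ ℙ (A k) * ENNReal.ofReal (1 - ρ) := by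
      intro k hk
      refine le_trans (measure_mono ?_) (le_of_eq (hkey k hk))
      rintro ω ⟨⟨hω1, hω2⟩, hω3⟩
      simp only [Set.mem_setOf_eq, not_lt] at hω3
      exact ⟨⟨hω1, hω2⟩, by simp only [Set.mem_setOf_eq]; linarith⟩
    have h6 : A N \ {ω | x < Z 1 ω} = ∅ := by
      have hNN : ((N:ℝ)/N) = 1 := div_self hNR.ne'
      ext ω
      simp only [Set.mem_diff, Set.mem_empty_iff_false, iff_false]
      rintro ⟨⟨_, hω⟩, hω2⟩
      rw [hNN] at hω
      exact hω2 hω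
    have h7 : ∑ k ∈ Finset.range (N + 1), ℙ (A k \ {ω | x < Z 1 ω})
        ≤ ENNReal.ofReal (1 - ρ) * ℙ E := by
      rw [Finset.sum_range_succ, h6, measure_empty, add_zero]
      calc ∑ k ∈ Finset.range N, ℙ (A k \ {ω | x < Z 1 ω})
          ≤ ∑ k ∈ Finset.range N, ℙ (A k) * ENNReal.ofReal (1 - ρ) :=
            Finset.sum_le_sum (fun k hk => h5 k (Finset.mem_range.mp hk))
        _ = (∑ k ∈ Finset.range N, ℙ (A k)) * ENNReal.ofReal (1 - ρ) :=
            (Finset.sum_mul _ _ _).symm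
        _ ≤ (∑ k ∈ Finset.range (N + 1), ℙ (A k)) * ENNReal.ofReal (1 - ρ) := by
            exact mul_le_mul_left
              (Finset.sum_le_sum_of_subset (Finset.range_subset_range.mpr (Nat.le_succ N))) _
        _ = ENNReal.ofReal (1 - ρ) * ℙ E := by rw [← hsplit, mul_comm]
    calc ℙ E = ℙ (E ∩ {ω | x < Z 1 ω}) + ℙ (E \ {ω | x < Z 1 ω}) := h1
      _ ≤ ℙ {ω | x < Z 1 ω} + ENNReal.ofReal (1 - ρ) * ℙ E := add_le_add h2 (h4.trans h7)
  -- real arithmetic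
  have hEfin : ℙ E ≠ ⊤ := measure_ne_top _ _
  have hsfin : ℙ {ω | x < Z 1 ω} ≠ ⊤ := measure_ne_top _ _
  set a := (ℙ E).toReal with ha
  set b := (ℙ {ω | x < Z 1 ω}).toReal with hb
  have hra : ℙ E = ENNReal.ofReal a := (ENNReal.ofReal_toReal hEfin).symm
  have hrb : ℙ {ω | x < Z 1 ω} = ENNReal.ofReal b := (ENNReal.ofReal_toReal hsfin).symm
  have ha0 : 0 ≤ a := ENNReal.toReal_nonneg
  have hb0 : 0 ≤ b := ENNReal.toReal_nonneg
  have hreal : a ≤ b + (1 - ρ) * a := by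
    have := hmain
    rw [hra, hrb] at this
    rw [← ENNReal.ofReal_mul (by linarith [hρ.2]), ← ENNReal.ofReal_add hb0
      (by nlinarith [hρ.2])] at this
    have h := (ENNReal.ofReal_le_ofReal_iff (by nlinarith [hρ.2])).mp this
    linarith
  have hfin : ρ * a ≤ b := by nlinarith
  rw [hra, hrb, ← ENNReal.ofReal_mul hρ.1.le]
  exact ENNReal.ofReal_le_ofReal hfin

/-- **Tail bounds for the supremum of a Lévy process in terms of the positive part of the
marginal.**  Let `Z = (Z_t)_{t∈[0,1]}` be a right-continuous process with stationary
independent increments, `Z₀ = 0`, such that `0` is regular for `(0,∞)` and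
`P(Z_t > 0) = ρ` for `t ∈ (0,1]`.  Let `Z̄₁ = sup_{t∈[0,1]} Z_t` and let `S` be `Z₁`
conditioned on `{Z₁ > 0}`.  Then for every `x > 0`:
`ρ P(S > x) ≤ P(Z̄₁ > x) ≤ P(S > x)`. -/
theorem sup_tail_bounds_levy
    {Ω : Type*} [MeasureSpace Ω] [IsProbabilityMeasure (ℙ : Measure Ω)]
    (ρ : ℝ) (hρ : ρ ∈ Set.Ioc (0 : ℝ) 1)
    (Z : ℝ → Ω → ℝ)
    (hZm : ∀ t, Measurable (Z t))
    (hZ0 : ∀ ω, Z 0 ω = 0)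
    (hrc : ∀ ω t, ContinuousWithinAt (fun s => Z s ω) (Set.Ici t) t)
    -- stationary increments
    (hstat : ∀ s t : ℝ, 0 ≤ s → s ≤ t →
      Measure.map (fun ω => Z t ω - Z s ω) ℙ = Measure.map (Z (t - s)) ℙ)
    -- independent increments
    (hindep : ∀ (n : ℕ) (t : Fin (n + 1) → ℝ), Monotone t → 0 ≤ t 0 →
      iIndepFun (m := fun _ : Fin n => (inferInstance : MeasurableSpace ℝ))
        (fun i ω => Z (t i.succ) ω - Z (t i.castSucc) ω) ℙ)
    -- 0 is regular for (0,∞)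
    (hreg : ∀ᵐ ω ∂ℙ, ∀ ε > (0 : ℝ), ∃ t, 0 < t ∧ t < ε ∧ 0 < Z t ω)
    -- constant positivity probability ρ
    (hpos : ∀ t : ℝ, 0 < t → t ≤ 1 → ℙ {ω | 0 < Z t ω} = ENNReal.ofReal ρ) :
    ∀ x : ℝ, 0 < x →
      ENNReal.ofReal ρ * (ℙ[|{ω | 0 < Z 1 ω}]) {ω | x < Z 1 ω}
          ≤ ℙ {ω | x < ⨆ s : Set.Icc (0 : ℝ) 1, Z (s : ℝ) ω} ∧
      ℙ {ω | x < ⨆ s : Set.Icc (0 : ℝ) 1, Z (s : ℝ) ω}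
          ≤ (ℙ[|{ω | 0 < Z 1 ω}]) {ω | x < Z 1 ω} := by
  classical
  intro x hx
  haveI hne : Nonempty (Set.Icc (0:ℝ) 1) := ⟨⟨0, Set.mem_Icc.mpr ⟨le_rfl, zero_le_one⟩⟩⟩
  have hρ0 : ENNReal.ofReal ρ ≠ 0 := by
    simp only [ne_eq, ENNReal.ofReal_eq_zero, not_le]
    exact hρ.1
  have hρt : ENNReal.ofReal ρ ≠ ⊤ := ENNReal.ofReal_ne_top
  -- grid events
  set G : ℕ → ℝ → Set Ω := fun n y => {ω | ∃ k : ℕ, k ≤ 2^n ∧ y < Z ((k : ℝ) / ((2^n : ℕ) : ℝ)) ω}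
    with hG
  have hGbound : ∀ (n : ℕ) (y : ℝ), 0 ≤ y →
      ENNReal.ofReal ρ * ℙ (G n y) ≤ ℙ {ω | y < Z 1 ω} := by
    intro n y hy
    exact discrete_bound ρ hρ Z hZm hZ0 hstat hindep hpos y hy (2^n) (pow_pos two_pos n)
  have hGmono : ∀ y, Monotone (fun n => G n y) := by
    intro y n m hnm
    rintro ω ⟨k, hk, hkx⟩
    refine ⟨k * 2^(m - n), ?_, ?_⟩
    · calc k * 2^(m-n) ≤ 2^n * 2^(m-n) := Nat.mul_le_mul_right _ hk
        _ = 2^m := by rw [← pow_add]; congr 1; omega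
    · have hcast : ((k * 2^(m-n) : ℕ) : ℝ) / ((2^m : ℕ) : ℝ)
          = ((k : ℕ) : ℝ) / ((2^n : ℕ) : ℝ) := by
        have h2m : (2:ℝ)^m = 2^n * 2^(m-n) := by rw [← pow_add]; congr 1; omega
        push_cast
        rw [h2m]
        have h1 : (2:ℝ)^n ≠ 0 := by positivity
        have h2 : (2:ℝ)^(m-n) ≠ 0 := by positivity
        field_simp
      rw [hcast]
      exact hkx
  -- covering by grid events via right continuity
  have hcover : ∀ (y : ℝ) (ω : Ω), (∃ s : Set.Icc (0:ℝ) 1, y < Z (s:ℝ) ω) →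
      ∃ n, ω ∈ G n y := by
    rintro y ω ⟨⟨s, hs0, hs1⟩, hsy⟩
    rcases eq_or_lt_of_le hs1 with heq | hlt
    · refine ⟨0, 1, le_rfl, ?_⟩
      norm_num
      rw [← heq]
      exact hsy
    · -- s < 1
      have hev : (fun u => Z u ω) ⁻¹' Set.Ioi y ∈ nhdsWithin s (Set.Ici s) :=
        (hrc ω s) (Ioi_mem_nhds hsy)
      rw [mem_nhdsGE_iff_exists_Ico_subset] at hev
      obtain ⟨u, hu, hsub⟩ := hev
      set u' := min u 1 with hu'
      have hsu' : s < u' := lt_min hu hlt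
      obtain ⟨n, hn⟩ := exists_pow_lt_of_lt_one (sub_pos.mpr hsu') (by norm_num : (1:ℝ)/2 < 1)
      set k := ⌈s * 2^n⌉₊ with hk
      have h2n : (0:ℝ) < 2^n := by positivity
      have hk1 : s ≤ (k : ℝ) / 2^n := by
        rw [le_div_iff₀ h2n]
        exact Nat.le_ceil _
      have hk2 : (k : ℝ) / 2^n < s + (1/2)^n := by
        rw [div_lt_iff₀ h2n]
        have := Nat.ceil_lt_add_one (by positivity : (0:ℝ) ≤ s * 2^n)
        calc (k:ℝ) < s * 2^n + 1 := this
          _ = (s + (1/2)^n) * 2^n := by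
            rw [add_mul]
            congr 1
            rw [div_pow, one_pow]
            field_simp
      have hkq : (k:ℝ)/2^n < u' := by linarith
      have hkN : k ≤ 2^n := by
        rw [hk, Nat.ceil_le]
        push_cast
        nlinarith
      refine ⟨n, k, hkN, ?_⟩
      have hmem : (k:ℝ)/2^n ∈ Set.Ico s u := by
        constructor
        · exact hk1
        · exact lt_of_lt_of_le hkq (min_le_left _ _)
      have := hsub hmem
      simp only [Set.mem_preimage, Set.mem_Ioi] at this
      have hcast : (((2:ℕ)^n : ℕ) : ℝ) = (2:ℝ)^n := by push_cast; ring
      rw [hcast]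
      exact this
  -- upper bound for arbitrary nonneg threshold
  have hupper0 : ∀ y : ℝ, 0 ≤ y →
      ℙ {ω | ∃ s : Set.Icc (0:ℝ) 1, y < Z (s:ℝ) ω}
        ≤ (ENNReal.ofReal ρ)⁻¹ * ℙ {ω | y < Z 1 ω} := by
    intro y hy
    have hsub : {ω | ∃ s : Set.Icc (0:ℝ) 1, y < Z (s:ℝ) ω} ⊆ ⋃ n, G n y := by
      intro ω hω
      obtain ⟨n, hn⟩ := hcover y ω hω
      exact Set.mem_iUnion.mpr ⟨n, hn⟩
    calc ℙ {ω | ∃ s : Set.Icc (0:ℝ) 1, y < Z (s:ℝ) ω} ≤ ℙ (⋃ n, G n y) := measure_mono hsub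
      _ = ⨆ n, ℙ (G n y) := (hGmono y).directed_le.measure_iUnion
      _ ≤ (ENNReal.ofReal ρ)⁻¹ * ℙ {ω | y < Z 1 ω} := by
          refine iSup_le fun n => ?_
          calc ℙ (G n y) = (ENNReal.ofReal ρ)⁻¹ * (ENNReal.ofReal ρ * ℙ (G n y)) := by
                rw [← mul_assoc, ENNReal.inv_mul_cancel hρ0 hρt, one_mul]
            _ ≤ (ENNReal.ofReal ρ)⁻¹ * ℙ {ω | y < Z 1 ω} :=
                mul_le_mul_right (hGbound n y hy) _
  -- a.s. boundedness
  have hNnull : ℙ {ω | ¬ BddAbove (Set.range fun s : Set.Icc (0:ℝ) 1 => Z (s:ℝ) ω)} = 0 := by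
    have hsub : ∀ m : ℕ, {ω | ¬ BddAbove (Set.range fun s : Set.Icc (0:ℝ) 1 => Z (s:ℝ) ω)}
        ⊆ {ω | ∃ s : Set.Icc (0:ℝ) 1, (m:ℝ) < Z (s:ℝ) ω} := by
      intro m ω hω
      simp only [Set.mem_setOf_eq] at hω ⊢
      rw [not_bddAbove_iff] at hω
      obtain ⟨z, ⟨s, rfl⟩, hz⟩ := hω m
      exact ⟨s, hz⟩
    have hle : ∀ m : ℕ,
        ℙ {ω | ¬ BddAbove (Set.range fun s : Set.Icc (0:ℝ) 1 => Z (s:ℝ) ω)}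
          ≤ (ENNReal.ofReal ρ)⁻¹ * ℙ {ω | (m:ℝ) < Z 1 ω} := fun m =>
      le_trans (measure_mono (hsub m)) (hupper0 m (Nat.cast_nonneg m))
    have htend : Filter.Tendsto (fun m : ℕ => ℙ {ω | (m:ℝ) < Z 1 ω})
        Filter.atTop (nhds 0) := by
      have h1 : (⋂ m : ℕ, {ω | (m:ℝ) < Z 1 ω}) = ∅ := by
        ext ω
        simp only [Set.mem_iInter, Set.mem_setOf_eq, Set.mem_empty_iff_false, iff_false, not_forall,
          not_lt]
        obtain ⟨m, hm⟩ := exists_nat_gt (Z 1 ω)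
        exact ⟨m, hm.le⟩
      have h2 := tendsto_measure_iInter_atTop (μ := (ℙ : Measure Ω))
        (s := fun m : ℕ => {ω | (m:ℝ) < Z 1 ω})
        (fun m => (measurableSet_lt measurable_const (hZm 1)).nullMeasurableSet)
        (fun m l hml => by
          intro ω hω
          simp only [Set.mem_setOf_eq] at hω ⊢
          have : (m:ℝ) ≤ (l:ℝ) := by exact_mod_cast hml
          linarith)
        ⟨0, measure_ne_top _ _⟩
      rw [h1, measure_empty] at h2
      exact h2
    have htend2 : Filter.Tendsto (fun m : ℕ => (ENNReal.ofReal ρ)⁻¹ * ℙ {ω | (m:ℝ) < Z 1 ω})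
        Filter.atTop (nhds 0) := by
      have h3 := ENNReal.Tendsto.const_mul (a := (ENNReal.ofReal ρ)⁻¹) (b := 0) htend
        (Or.inr (ENNReal.inv_ne_top.mpr hρ0))
      rwa [mul_zero] at h3
    exact le_antisymm (ge_of_tendsto' htend2 hle) zero_le
  -- final assembly
  have hs1m : MeasurableSet {ω | 0 < Z 1 ω} := measurableSet_lt measurable_const (hZm 1)
  have hP1 : ℙ {ω | 0 < Z 1 ω} = ENNReal.ofReal ρ := hpos 1 one_pos le_rfl
  have hinter : {ω | 0 < Z 1 ω} ∩ {ω | x < Z 1 ω} = {ω | x < Z 1 ω} := by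
    apply Set.inter_eq_self_of_subset_right
    intro ω hω
    simp only [Set.mem_setOf_eq] at hω ⊢
    linarith
  have hcond : (ℙ[|{ω | 0 < Z 1 ω}]) {ω | x < Z 1 ω}
      = (ENNReal.ofReal ρ)⁻¹ * ℙ {ω | x < Z 1 ω} := by
    rw [cond_apply hs1m, hP1, hinter]
  constructor
  · -- lower bound
    rw [hcond, ← mul_assoc, ENNReal.mul_inv_cancel hρ0 hρt, one_mul]
    have hsub : {ω | x < Z 1 ω} ⊆ {ω | x < ⨆ s : Set.Icc (0:ℝ) 1, Z (s:ℝ) ω}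
        ∪ {ω | ¬ BddAbove (Set.range fun s : Set.Icc (0:ℝ) 1 => Z (s:ℝ) ω)} := by
      intro ω hω
      by_cases hbdd : BddAbove (Set.range fun s : Set.Icc (0:ℝ) 1 => Z (s:ℝ) ω)
      · left
        simp only [Set.mem_setOf_eq] at hω ⊢
        have h1 : Z ((⟨1, Set.mem_Icc.mpr ⟨zero_le_one, le_rfl⟩⟩ : Set.Icc (0:ℝ) 1) : ℝ) ω
            ≤ ⨆ s : Set.Icc (0:ℝ) 1, Z (s:ℝ) ω := le_ciSup hbdd _
        exact lt_of_lt_of_le hω h1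
      · right
        exact hbdd
    calc ℙ {ω | x < Z 1 ω}
        ≤ ℙ ({ω | x < ⨆ s : Set.Icc (0:ℝ) 1, Z (s:ℝ) ω}
            ∪ {ω | ¬ BddAbove (Set.range fun s : Set.Icc (0:ℝ) 1 => Z (s:ℝ) ω)}) :=
          measure_mono hsub
      _ ≤ ℙ {ω | x < ⨆ s : Set.Icc (0:ℝ) 1, Z (s:ℝ) ω}
            + ℙ {ω | ¬ BddAbove (Set.range fun s : Set.Icc (0:ℝ) 1 => Z (s:ℝ) ω)} :=
          measure_union_le _ _
      _ = ℙ {ω | x < ⨆ s : Set.Icc (0:ℝ) 1, Z (s:ℝ) ω} := by rw [hNnull, add_zero]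
  · -- upper bound
    rw [hcond]
    have hsub : {ω | x < ⨆ s : Set.Icc (0:ℝ) 1, Z (s:ℝ) ω}
        ⊆ {ω | ∃ s : Set.Icc (0:ℝ) 1, x < Z (s:ℝ) ω} := by
      intro ω hω
      simp only [Set.mem_setOf_eq] at hω ⊢
      exact exists_lt_of_lt_ciSup hω
    exact le_trans (measure_mono hsub) (hupper0 x hx.le)
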